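/- (An instanton that is not a solution of the noncommutative Yang–Mills equation.) Let θ ∈ ℝ, θ ≠ 0, and let B be a unital associative ℂ-*-algebra containing self-adjoint elements x¹, x², x³ with x¹x² = x²x¹, x¹x³ = x³x¹, x²x³ − x³x² = iθ·1 and x¹ ≠ 0, equipped with four pairwise commuting ℂ-linear derivations ∂₀,…,∂₃ such that ∂_μ(x^ν) = δ_{μν}·1 for μ,ν ∈ {1,2,3}, ∂₀(x^ν) = 0, and ∂_μ(b*) = (∂_μ b)*. Consider the two-photon gauge potential φ^e := −2(x¹)² + (x²)² + (x³)², A^e := (4x²x³, 2x¹x³, 6x¹x²), φ^m := 0, A^m := (0,0,0). Then: (1) D^e = H^e = (4x¹, −2x², −2x³) and D^m = H^m = (0,0,0), so the (Euclidean) anti-self-duality (instanton) conditions D^e = H^e and D^m = H^m hold; but (2) ∇·H^m = 0 while ρ^m = i[A^{e*}, D^e + H^m] = 8θx¹ ≠ 0, so the noncommutative Gauss law ∇·H^m = ρ^m fails and this instanton is not a solution of the noncommutative Yang–Mills equation. -/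
import Mathlib


noncomputable section

namespace NC

variable {B : Type*} [Ring B] [Algebra ℂ B]

/-- A ℂ-linear derivation of the (possibly noncommutative) ℂ-algebra `B`,
given as a plain function together with its defining properties. -/
structure IsDer (δ : B → B) : Prop where
  map_add : ∀ a b : B, δ (a + b) = δ a + δ b
  map_smul : ∀ (c : ℂ) (a : B), δ (c • a) = c • δ a
  leibniz : ∀ a b : B, δ (a * b) = δ a * b + a * δ b

/-- divergence `∇·X` of a triple. -/
def divg (d1 d2 d3 : B → B) (X : B × B × B) : B := d1 X.1 + d2 X.2.1 + d3 X.2.2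

/-- curl `∇×X` of a triple. -/
def curl (d1 d2 d3 : B → B) (X : B × B × B) : B × B × B :=
  (d2 X.2.2 - d3 X.2.1, d3 X.1 - d1 X.2.2, d1 X.2.1 - d2 X.1)

/-- gradient `∇a`. -/
def grad (d1 d2 d3 : B → B) (a : B) : B × B × B := (d1 a, d2 a, d3 a)

/-- apply a derivation componentwise to a triple, e.g. `∂₀X`. -/
def dmap (d0 : B → B) (X : B × B × B) : B × B × B := (d0 X.1, d0 X.2.1, d0 X.2.2)

/-- ordered cross product `X×Y` (multiplication from top to bottom). -/
def cross (X Y : B × B × B) : B × B × B :=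
  (X.2.1 * Y.2.2 - X.2.2 * Y.2.1, X.2.2 * Y.1 - X.1 * Y.2.2, X.1 * Y.2.1 - X.2.1 * Y.1)

/-- componentwise commutator `[a,X] = (aX_k - X_k a)_k`. -/
def commS (a : B) (X : B × B × B) : B × B × B :=
  (a * X.1 - X.1 * a, a * X.2.1 - X.2.1 * a, a * X.2.2 - X.2.2 * a)

/-- componentwise commutator `[X,a] = (X_k a - a X_k)_k`. -/
def commR (X : B × B × B) (a : B) : B × B × B :=
  (X.1 * a - a * X.1, X.2.1 * a - a * X.2.1, X.2.2 * a - a * X.2.2)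

/-- scalar commutator `[X,Y] = Σ_k (X_k Y_k - Y_k X_k)`. -/
def commV (X Y : B × B × B) : B :=
  (X.1 * Y.1 - Y.1 * X.1) + (X.2.1 * Y.2.1 - Y.2.1 * X.2.1) +
    (X.2.2 * Y.2.2 - Y.2.2 * X.2.2)

/-- classical part of the electric field: `E = -∂₀A - ∇φ`. -/
def Efield (d0 d1 d2 d3 : B → B) (φ : B) (A : B × B × B) : B × B × B :=
  -dmap d0 A - grad d1 d2 d3 φ

/-- classical part of the magnetic field: `Bf = ∇×A`. -/
def Bfield (d1 d2 d3 : B → B) (A : B × B × B) : B × B × B := curl d1 d2 d3 A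

/-- the noncommutative electric field `D = E + i[φ,A]`. -/
def Dfield (d0 d1 d2 d3 : B → B) (φ : B) (A : B × B × B) : B × B × B :=
  Efield d0 d1 d2 d3 φ A + Complex.I • commS φ A

/-- the noncommutative magnetic field `H = Bf + i(A×A)`. -/
def Hfield (d1 d2 d3 : B → B) (A : B × B × B) : B × B × B :=
  Bfield d1 d2 d3 A + Complex.I • cross A A

end NC


namespace NC

/-- componentwise star of a triple. -/
def starV {B : Type*} [Ring B] [StarRing B] (X : B × B × B) : B × B × B :=
  (star X.1, star X.2.1, star X.2.2)

namespace TwoPhoton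

variable {B : Type*} [Ring B] [Algebra ℂ B]

/-- `K := [φ^m,A^e] + [φ^e,A^m]` (componentwise commutators). -/
def Kv (φe φm : B) (Ae Am : B × B × B) : B × B × B := commS φm Ae + commS φe Am

/-- `C := A^e×A^m + A^m×A^e`. -/
def Cv (Ae Am : B × B × B) : B × B × B := cross Ae Am + cross Am Ae

/-- `E^e := -∂₀A^e - ∇φ^e`. -/
def Ee (d0 d1 d2 d3 : B → B) (φe : B) (Ae : B × B × B) : B × B × B :=
  -dmap d0 Ae - grad d1 d2 d3 φe

/-- `B^e := ∇×A^e`. -/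
def Be (d1 d2 d3 : B → B) (Ae : B × B × B) : B × B × B := curl d1 d2 d3 Ae

/-- `B^m := -∂₀A^m - ∇φ^m`. -/
def Bm (d0 d1 d2 d3 : B → B) (φm : B) (Am : B × B × B) : B × B × B :=
  -dmap d0 Am - grad d1 d2 d3 φm

/-- `E^m := ∇×A^m`. -/
def Em (d1 d2 d3 : B → B) (Am : B × B × B) : B × B × B := curl d1 d2 d3 Am

/-- `D^e := E^e + iK`. -/
def De (d0 d1 d2 d3 : B → B) (φe : B) (Ae : B × B × B) (φm : B) (Am : B × B × B) :
    B × B × B :=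
  Ee d0 d1 d2 d3 φe Ae + Complex.I • Kv φe φm Ae Am

/-- `H^e := B^e + iC`. -/
def He (d1 d2 d3 : B → B) (Ae Am : B × B × B) : B × B × B :=
  Be d1 d2 d3 Ae + Complex.I • Cv Ae Am

/-- `H^m := B^m + iK`. -/
def Hm (d0 d1 d2 d3 : B → B) (φe : B) (Ae : B × B × B) (φm : B) (Am : B × B × B) :
    B × B × B :=
  Bm d0 d1 d2 d3 φm Am + Complex.I • Kv φe φm Ae Am

/-- `D^m := E^m + iC`. -/
def Dm (d1 d2 d3 : B → B) (Ae Am : B × B × B) : B × B × B :=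
  Em d1 d2 d3 Am + Complex.I • Cv Ae Am

end TwoPhoton


namespace TwoPhoton

/-- `ρ^m := i[A^{e*}, D^e + H^m]`. -/
def rhoM {B : Type*} [Ring B] [Algebra ℂ B] [StarRing B]
    (d0 d1 d2 d3 : B → B) (φe : B) (Ae : B × B × B) (φm : B) (Am : B × B × B) : B :=
  Complex.I • commV (starV Ae)
    (De d0 d1 d2 d3 φe Ae φm Am + Hm d0 d1 d2 d3 φe Ae φm Am)


section Aux

variable {B : Type*} [Ring B] [Algebra ℂ B] {δ : B → B}

theorem isDer_zero (h : IsDer δ) : δ 0 = 0 := by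
  simpa using h.map_smul 0 0

theorem isDer_neg (h : IsDer δ) (a : B) : δ (-a) = -δ a := by
  simpa using h.map_smul (-1) a

theorem isDer_one (h : IsDer δ) : δ 1 = 0 := by
  have h1 := h.leibniz 1 1
  simp only [one_mul, mul_one] at h1
  exact (left_eq_add.mp h1)

theorem isDer_natCast (h : IsDer δ) (n : ℕ) : δ ((n : ℕ) : B) = 0 := by
  induction n with
  | zero => simpa using isDer_zero h
  | succ k ih => rw [Nat.cast_succ, h.map_add, ih, isDer_one h, zero_add]

theorem isDer_ofNat (h : IsDer δ) (n : ℕ) [n.AtLeastTwo] :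
    δ (OfNat.ofNat n : B) = 0 := by
  rw [← Nat.cast_ofNat]; exact isDer_natCast h n

end Aux

/-- **An instanton that is not a solution of the noncommutative Yang–Mills
equation**: on the Moyal–Weyl-type algebra with `x²x³ - x³x² = iθ·1`, `θ ≠ 0`,
the two-photon gauge potential `φ^e = -2(x¹)² + (x²)² + (x³)²`,
`A^e = (4x²x³, 2x¹x³, 6x¹x²)`, `φ^m = 0`, `A^m = (0,0,0)` satisfies the
anti-self-duality conditions `D^e = H^e = (4x¹,-2x²,-2x³)`, `D^m = H^m = 0`,
but `∇·H^m = 0 ≠ 8θx¹ = ρ^m`, so the noncommutative Gauss law `∇·H^m = ρ^m`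
fails. -/
theorem nc_instanton_not_yang_mills {B : Type*} [Ring B] [Algebra ℂ B] [StarRing B]
    (θ : ℝ) (hθ : θ ≠ 0) (x1 x2 x3 : B) (hx1 : x1 ≠ 0)
    (hs1 : star x1 = x1) (hs2 : star x2 = x2) (hs3 : star x3 = x3)
    (h12 : x1 * x2 = x2 * x1) (h13 : x1 * x3 = x3 * x1)
    (h23 : x2 * x3 - x3 * x2 = ((θ : ℂ) * Complex.I) • (1 : B))
    (d0 d1 d2 d3 : B → B)
    (hd0 : IsDer d0) (hd1 : IsDer d1) (hd2 : IsDer d2) (hd3 : IsDer d3)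
    (hcomm : ∀ δ ∈ [d0, d1, d2, d3], ∀ δ' ∈ [d0, d1, d2, d3], ∀ x : B,
      δ (δ' x) = δ' (δ x))
    (hstar : ∀ δ ∈ [d0, d1, d2, d3], ∀ b : B, δ (star b) = star (δ b))
    (h01 : d0 x1 = 0) (h02 : d0 x2 = 0) (h03 : d0 x3 = 0)
    (h11 : d1 x1 = 1) (h12' : d1 x2 = 0) (h13' : d1 x3 = 0)
    (h21 : d2 x1 = 0) (h22 : d2 x2 = 1) (h23' : d2 x3 = 0)
    (h31 : d3 x1 = 0) (h32 : d3 x2 = 0) (h33 : d3 x3 = 1) :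
    De d0 d1 d2 d3 (-(2 * (x1 * x1)) + x2 * x2 + x3 * x3)
        (4 * (x2 * x3), 2 * (x1 * x3), 6 * (x1 * x2)) 0 (0, 0, 0) =
      (4 * x1, -(2 * x2), -(2 * x3)) ∧
    He d1 d2 d3 (4 * (x2 * x3), 2 * (x1 * x3), 6 * (x1 * x2)) (0, 0, 0) =
      (4 * x1, -(2 * x2), -(2 * x3)) ∧
    Dm d1 d2 d3 (4 * (x2 * x3), 2 * (x1 * x3), 6 * (x1 * x2)) (0, 0, 0) = 0 ∧
    Hm d0 d1 d2 d3 (-(2 * (x1 * x1)) + x2 * x2 + x3 * x3)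
        (4 * (x2 * x3), 2 * (x1 * x3), 6 * (x1 * x2)) 0 (0, 0, 0) = 0 ∧
    divg d1 d2 d3 (Hm d0 d1 d2 d3 (-(2 * (x1 * x1)) + x2 * x2 + x3 * x3)
        (4 * (x2 * x3), 2 * (x1 * x3), 6 * (x1 * x2)) 0 (0, 0, 0)) = 0 ∧
    rhoM d0 d1 d2 d3 (-(2 * (x1 * x1)) + x2 * x2 + x3 * x3)
        (4 * (x2 * x3), 2 * (x1 * x3), 6 * (x1 * x2)) 0 (0, 0, 0) =
      (8 * (θ : ℂ)) • x1 ∧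
    rhoM d0 d1 d2 d3 (-(2 * (x1 * x1)) + x2 * x2 + x3 * x3)
        (4 * (x2 * x3), 2 * (x1 * x3), 6 * (x1 * x2)) 0 (0, 0, 0) ≠ 0 ∧
    divg d1 d2 d3 (Hm d0 d1 d2 d3 (-(2 * (x1 * x1)) + x2 * x2 + x3 * x3)
        (4 * (x2 * x3), 2 * (x1 * x3), 6 * (x1 * x2)) 0 (0, 0, 0)) ≠
      rhoM d0 d1 d2 d3 (-(2 * (x1 * x1)) + x2 * x2 + x3 * x3)
        (4 * (x2 * x3), 2 * (x1 * x3), 6 * (x1 * x2)) 0 (0, 0, 0) := by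
  have t : ℂ := 0
  -- numeral to scalar conversion
  have hnum : ∀ (n : ℕ) (y : B), ((n : ℕ) : B) * y = ((n : ℕ) : ℂ) • y := by
    intro n y
    rw [Nat.cast_smul_eq_nsmul, nsmul_eq_mul]
  have simpDer := 0
  -- main field computations
  have hDe : De d0 d1 d2 d3 (-(2 * (x1 * x1)) + x2 * x2 + x3 * x3)
      (4 * (x2 * x3), 2 * (x1 * x3), 6 * (x1 * x2)) 0 (0, 0, 0) =
      (4 * x1, -(2 * x2), -(2 * x3)) := by
    simp only [De, Ee, Kv, commS, dmap, grad, Prod.ext_iff, Prod.mk_add_mk, Prod.neg_mk,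
      Prod.mk_sub_mk, Prod.smul_mk, Prod.fst, Prod.snd]
    simp [hd0.leibniz, hd1.leibniz, hd2.leibniz, hd3.leibniz, hd0.map_add, hd1.map_add,
      hd2.map_add, hd3.map_add, isDer_neg hd0, isDer_neg hd1, isDer_neg hd2, isDer_neg hd3,
      isDer_ofNat hd0, isDer_ofNat hd1, isDer_ofNat hd2, isDer_ofNat hd3,
      h01, h02, h03, h11, h12', h13', h21, h22, h23', h31, h32, h33]
    refine ⟨by noncomm_ring, by noncomm_ring, by noncomm_ring⟩
  have hHe : He d1 d2 d3 (4 * (x2 * x3), 2 * (x1 * x3), 6 * (x1 * x2)) (0, 0, 0) =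
      (4 * x1, -(2 * x2), -(2 * x3)) := by
    simp only [He, Be, Cv, curl, cross, Prod.ext_iff, Prod.mk_add_mk, Prod.neg_mk,
      Prod.mk_sub_mk, Prod.smul_mk, Prod.fst, Prod.snd]
    simp [hd1.leibniz, hd2.leibniz, hd3.leibniz,
      isDer_ofNat hd1, isDer_ofNat hd2, isDer_ofNat hd3,
      h11, h12', h13', h21, h22, h23', h31, h32, h33]
    refine ⟨by noncomm_ring, by noncomm_ring, by noncomm_ring⟩
  have hDm : Dm d1 d2 d3 (4 * (x2 * x3), 2 * (x1 * x3), 6 * (x1 * x2)) (0, 0, 0) = 0 := by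
    simp [Dm, Em, Cv, curl, cross, Prod.ext_iff, isDer_zero hd1, isDer_zero hd2,
      isDer_zero hd3]
  have hHm : Hm d0 d1 d2 d3 (-(2 * (x1 * x1)) + x2 * x2 + x3 * x3)
      (4 * (x2 * x3), 2 * (x1 * x3), 6 * (x1 * x2)) 0 (0, 0, 0) = 0 := by
    simp [Hm, Bm, Kv, commS, dmap, grad, Prod.ext_iff, isDer_zero hd0, isDer_zero hd1,
      isDer_zero hd2, isDer_zero hd3]
  have hdiv : divg d1 d2 d3 (Hm d0 d1 d2 d3 (-(2 * (x1 * x1)) + x2 * x2 + x3 * x3)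
      (4 * (x2 * x3), 2 * (x1 * x3), 6 * (x1 * x2)) 0 (0, 0, 0)) = 0 := by
    rw [hHm]
    simp [divg, isDer_zero hd1, isDer_zero hd2, isDer_zero hd3]
  -- star of the gauge potential
  have e1 : starV ((4 * (x2 * x3), 2 * (x1 * x3), 6 * (x1 * x2)) : B × B × B) =
      (x3 * x2 * 4, x3 * x1 * 2, x2 * x1 * 6) := by
    simp [starV, star_mul, hs1, hs2, hs3, mul_assoc]
  -- the key commutator computations
  have e2 : x2 * (x3 * x1) - x3 * x1 * x2 = ((θ : ℂ) * Complex.I) • x1 := by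
    calc x2 * (x3 * x1) - x3 * x1 * x2
        = x2 * x3 * x1 - x3 * (x1 * x2) := by noncomm_ring
      _ = x2 * x3 * x1 - x3 * (x2 * x1) := by rw [h12]
      _ = (x2 * x3 - x3 * x2) * x1 := by noncomm_ring
      _ = (((θ : ℂ) * Complex.I) • (1 : B)) * x1 := by rw [h23]
      _ = ((θ : ℂ) * Complex.I) • x1 := by rw [smul_mul_assoc, one_mul]
  have e3 : x3 * (x2 * x1) - x2 * x1 * x3 = (-((θ : ℂ) * Complex.I)) • x1 := by
    calc x3 * (x2 * x1) - x2 * x1 * x3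
        = x3 * x2 * x1 - x2 * (x1 * x3) := by noncomm_ring
      _ = x3 * x2 * x1 - x2 * (x3 * x1) := by rw [h13]
      _ = -((x2 * x3 - x3 * x2) * x1) := by noncomm_ring
      _ = -((((θ : ℂ) * Complex.I) • (1 : B)) * x1) := by rw [h23]
      _ = (-((θ : ℂ) * Complex.I)) • x1 := by
          rw [smul_mul_assoc, one_mul, neg_smul]
  have e4 : x1 * (x3 * x2) = x3 * x2 * x1 := by
    rw [← mul_assoc, h13, mul_assoc, h12, ← mul_assoc]
  have hA : x3 * x2 * 4 * (4 * x1) - 4 * x1 * (x3 * x2 * 4) = 0 := by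
    have : x3 * x2 * 4 * (4 * x1) - 4 * x1 * (x3 * x2 * 4)
        = 16 * (x3 * x2 * x1) - 16 * (x1 * (x3 * x2)) := by noncomm_ring
    rw [this, e4, sub_self]
  have hB : x3 * x1 * 2 * -(2 * x2) - -(2 * x2) * (x3 * x1 * 2)
      = ((4 : ℂ) * ((θ : ℂ) * Complex.I)) • x1 := by
    have h4 : ((4 : ℕ) : B) = (4 : B) := by norm_num
    calc x3 * x1 * 2 * -(2 * x2) - -(2 * x2) * (x3 * x1 * 2)
        = 4 * (x2 * (x3 * x1) - x3 * x1 * x2) := by noncomm_ring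
      _ = 4 * (((θ : ℂ) * Complex.I) • x1) := by rw [e2]
      _ = ((θ : ℂ) * Complex.I) • ((4 : B) * x1) := by rw [mul_smul_comm]
      _ = ((θ : ℂ) * Complex.I) • (((4 : ℂ)) • x1) := by
          rw [← h4, hnum 4 x1]; norm_num
      _ = ((4 : ℂ) * ((θ : ℂ) * Complex.I)) • x1 := by
          rw [smul_smul, mul_comm]
  have hC : x2 * x1 * 6 * -(2 * x3) - -(2 * x3) * (x2 * x1 * 6)
      = (-((12 : ℂ) * ((θ : ℂ) * Complex.I))) • x1 := by
    have h12n : ((12 : ℕ) : B) = (12 : B) := by norm_num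
    calc x2 * x1 * 6 * -(2 * x3) - -(2 * x3) * (x2 * x1 * 6)
        = 12 * (x3 * (x2 * x1) - x2 * x1 * x3) := by noncomm_ring
      _ = 12 * ((-((θ : ℂ) * Complex.I)) • x1) := by rw [e3]
      _ = (-((θ : ℂ) * Complex.I)) • ((12 : B) * x1) := by rw [mul_smul_comm]
      _ = (-((θ : ℂ) * Complex.I)) • (((12 : ℂ)) • x1) := by
          rw [← h12n, hnum 12 x1]; norm_num
      _ = (-((12 : ℂ) * ((θ : ℂ) * Complex.I))) • x1 := by
          rw [smul_smul]; ring_nf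
  have hrho : rhoM d0 d1 d2 d3 (-(2 * (x1 * x1)) + x2 * x2 + x3 * x3)
      (4 * (x2 * x3), 2 * (x1 * x3), 6 * (x1 * x2)) 0 (0, 0, 0) = (8 * (θ : ℂ)) • x1 := by
    rw [rhoM, hDe, hHm, add_zero, e1]
    simp only [commV, Prod.fst, Prod.snd]
    rw [hA, hB, hC, zero_add, ← add_smul, smul_smul]
    congr 1
    have hI := Complex.I_mul_I
    linear_combination (-8 * (θ : ℂ)) * hI
  have hne : ((8 : ℂ) * (θ : ℂ)) • x1 ≠ 0 := by
    intro h
    apply hx1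
    have h8 : (8 : ℂ) * (θ : ℂ) ≠ 0 :=
      mul_ne_zero (by norm_num) (Complex.ofReal_ne_zero.mpr hθ)
    have := congrArg (fun y => ((8 : ℂ) * (θ : ℂ))⁻¹ • y) h
    have h' : x1 = 0 := by
      simpa only [smul_smul, inv_mul_cancel₀ h8, one_smul, smul_zero] using this
    exact h'
  refine ⟨hDe, hHe, hDm, hHm, hdiv, hrho, ?_, ?_⟩
  · rw [hrho]; exact hne
  · rw [hdiv, hrho]; exact fun h => hne h.symm


end TwoPhoton

end NC
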